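/- Let $G$ be a finite group that is an inner semidirect product $G = NH$, $N \cap H = \{1\}$, where $N$ is a normal nilpotent subgroup of nilpotency class at most 2 whose derived subgroup $N'$ has odd order, and $H$ is a subgroup whose underlying group admits a left brace structure. Then $G$ admits a left brace structure (i.e., there exists an abelian group operation $+$ on $G$ such that $(G,+,\cdot)$ is a left brace). -/

import Mathlib

open scoped commutatorElement

namespace Stmt8Aux

variable {G : Type*} [Group G]

/-- The Baer addition `x + y = x * y * ⁅y,x⁆ ^ k` (where `k` halves on the commutator part). -/
def nadd (k : ℕ) (x y : G) : G := x * y * ⁅y, x⁆ ^ k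

lemma comm_mul_right (a b c : G) (h : Commute ⁅a, c⁆ b) :
    ⁅a, b * c⁆ = ⁅a, b⁆ * ⁅a, c⁆ := by
  have e : ⁅a, b * c⁆ = ⁅a, b⁆ * (b * ⁅a, c⁆ * b⁻¹) := by group
  have e2 : b * ⁅a, c⁆ * b⁻¹ = ⁅a, c⁆ := by rw [h.symm.eq, mul_inv_cancel_right]
  rw [e, e2]

lemma comm_mul_left (a b c : G) (h : Commute ⁅b, c⁆ a) :
    ⁅a * b, c⁆ = ⁅b, c⁆ * ⁅a, c⁆ := by
  have e : ⁅a * b, c⁆ = (a * ⁅b, c⁆ * a⁻¹) * ⁅a, c⁆ := by group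
  have e2 : a * ⁅b, c⁆ * a⁻¹ = ⁅b, c⁆ := by rw [h.symm.eq, mul_inv_cancel_right]
  rw [e, e2]

lemma comm_mem {N : Subgroup G} {u v : G} (hu : u ∈ N) (hv : v ∈ N) : ⁅u, v⁆ ∈ N := by
  rw [commutatorElement_def]
  exact mul_mem (mul_mem (mul_mem hu hv) (inv_mem hu)) (inv_mem hv)

lemma nadd_mem {N : Subgroup G} {k : ℕ} {x y : G} (hx : x ∈ N) (hy : y ∈ N) :
    nadd k x y ∈ N :=
  mul_mem (mul_mem hx hy) (pow_mem (comm_mem hy hx) k)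

lemma swap {N : Subgroup G}
    (hc : ∀ a ∈ N, ∀ b ∈ N, ∀ c ∈ N, Commute ⁅a, b⁆ c)
    {x y : G} (hx : x ∈ N) (hy : y ∈ N) : y * x = x * y * ⁅y, x⁆ := by
  have h := (hc y hy x hx x hx).mul_right (hc y hy x hx y hy)
  have e : ⁅y, x⁆ * (x * y) = y * x := by group
  rw [← e]; exact h.eq

lemma nadd_conj (k : ℕ) (g x y : G) :
    g * nadd k x y * g⁻¹ = nadd k (g * x * g⁻¹) (g * y * g⁻¹) := by
  have h1 : g * nadd k x y * g⁻¹ = MulAut.conj g (nadd k x y) := rfl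
  have h2 : MulAut.conj g (nadd k x y)
      = MulAut.conj g x * MulAut.conj g y * (MulAut.conj g ⁅y, x⁆) ^ k := by
    simp only [nadd, map_mul, map_pow]
  rw [h1, h2, map_commutatorElement]; rfl

lemma nadd_one (k : ℕ) (x : G) : nadd k x 1 = x := by
  have : ⁅(1 : G), x⁆ = 1 := by group
  simp [nadd, this]

lemma nadd_inv (k : ℕ) (x : G) : nadd k x x⁻¹ = 1 := by
  have : ⁅x⁻¹, x⁆ = 1 := by group
  simp [nadd, this]

section Main

variable {N : Subgroup G} {k : ℕ}
  (hc : ∀ a ∈ N, ∀ b ∈ N, ∀ c ∈ N, Commute ⁅a, b⁆ c)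
  (hs : ∀ a ∈ N, ∀ b ∈ N, ⁅a, b⁆ ^ k * ⁅a, b⁆ ^ k = ⁅a, b⁆)

include hc hs in
lemma nadd_comm {x y : G} (hx : x ∈ N) (hy : y ∈ N) : nadd k x y = nadd k y x := by
  unfold nadd
  have hz : ⁅y, x⁆ * (⁅y, x⁆ ^ k)⁻¹ = ⁅y, x⁆ ^ k := by
    rw [mul_inv_eq_iff_eq_mul]; exact (hs y hy x hx).symm
  rw [show ⁅x, y⁆ ^ k = (⁅y, x⁆ ^ k)⁻¹ by rw [← inv_pow, commutatorElement_inv],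
      swap hc hx hy, mul_assoc (x * y) ⁅y, x⁆ (⁅y, x⁆ ^ k)⁻¹, hz]

include hc in
lemma nadd_assoc {x y z : G} (hx : x ∈ N) (hy : y ∈ N) (hz : z ∈ N) :
    nadd k (nadd k x y) z = nadd k x (nadd k y z) := by
  have h1 : ⁅z, ⁅y, x⁆ ^ k⁆ = 1 :=
    commutatorElement_eq_one_iff_commute.mpr ((hc y hy x hx z hz).pow_left k).symm
  have e1 : ⁅z, x * y * ⁅y, x⁆ ^ k⁆ = ⁅z, x⁆ * ⁅z, y⁆ := by
    rw [comm_mul_right z (x * y) (⁅y, x⁆ ^ k) (by rw [h1]; exact Commute.one_left _),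
        h1, mul_one, comm_mul_right z x y (hc z hz y hy x hx)]
  have h2 : ⁅⁅z, y⁆ ^ k, x⁆ = 1 :=
    commutatorElement_eq_one_iff_commute.mpr ((hc z hz y hy x hx).pow_left k)
  have e2 : ⁅y * z * ⁅z, y⁆ ^ k, x⁆ = ⁅z, x⁆ * ⁅y, x⁆ := by
    rw [comm_mul_left (y * z) (⁅z, y⁆ ^ k) x (by rw [h2]; exact Commute.one_left _),
        h2, one_mul, comm_mul_left y z x (hc z hz x hx y hy)]
  unfold nadd
  rw [e1, e2,
      Commute.mul_pow (hc z hz x hx ⁅z, y⁆ (comm_mem hz hy)) k,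
      Commute.mul_pow (hc z hz x hx ⁅y, x⁆ (comm_mem hy hx)) k]
  simp only [mul_assoc, mul_right_inj]
  rw [← mul_assoc (⁅y, x⁆ ^ k) z, ((hc y hy x hx z hz).pow_left k).eq,
      mul_assoc z, mul_right_inj]
  have hPQ : Commute (⁅y, x⁆ ^ k) (⁅z, x⁆ ^ k) :=
    ((hc y hy x hx ⁅z, x⁆ (comm_mem hz hx)).pow_left k).pow_right k
  have hPR : Commute (⁅y, x⁆ ^ k) (⁅z, y⁆ ^ k) :=
    ((hc y hy x hx ⁅z, y⁆ (comm_mem hz hy)).pow_left k).pow_right k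
  have hQR : Commute (⁅z, x⁆ ^ k) (⁅z, y⁆ ^ k) :=
    ((hc z hz x hx ⁅z, y⁆ (comm_mem hz hy)).pow_left k).pow_right k
  rw [← mul_assoc, hPQ.eq, mul_assoc, hPR.eq, ← mul_assoc, hQR.eq, mul_assoc]

include hc hs in
lemma nadd_brace {a b c : G} (ha : a ∈ N) (hb : b ∈ N) (hcc : c ∈ N) :
    nadd k (a * nadd k b c) a = nadd k (a * b) (a * c) := by
  have haa : ⁅a, a⁆ = 1 := by group
  have h1 : ⁅a, ⁅c, b⁆ ^ k⁆ = 1 :=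
    commutatorElement_eq_one_iff_commute.mpr ((hc c hcc b hb a ha).pow_left k).symm
  have hX : ⁅a, b * c * ⁅c, b⁆ ^ k⁆ = ⁅a, b⁆ * ⁅a, c⁆ := by
    rw [comm_mul_right a (b * c) (⁅c, b⁆ ^ k) (by rw [h1]; exact Commute.one_left _),
        h1, mul_one, comm_mul_right a b c (hc a ha c hcc b hb)]
  have eL : ⁅a, a * (b * c * ⁅c, b⁆ ^ k)⁆ = ⁅a, b⁆ * ⁅a, c⁆ := by
    rw [comm_mul_right a a (b * c * ⁅c, b⁆ ^ k)
        (by rw [hX]; exact (hc a ha b hb a ha).mul_left (hc a ha c hcc a ha)),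
        hX, haa, one_mul]
  have h2 : ⁅c, a * b⁆ = ⁅c, a⁆ * ⁅c, b⁆ := comm_mul_right c a b (hc c hcc b hb a ha)
  have h3 : ⁅a, a * b⁆ = ⁅a, b⁆ := by
    rw [comm_mul_right a a b (hc a ha b hb a ha), haa, one_mul]
  have eR : ⁅a * c, a * b⁆ = ⁅c, a⁆ * (⁅c, b⁆ * ⁅a, b⁆) := by
    rw [comm_mul_left a c (a * b)
        (by rw [h2]; exact (hc c hcc a ha a ha).mul_left (hc c hcc b hb a ha)),
        h2, h3, mul_assoc]
  unfold nadd
  rw [eL, eR,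
      Commute.mul_pow (hc a ha b hb ⁅a, c⁆ (comm_mem ha hcc)) k,
      Commute.mul_pow ((hc c hcc a ha ⁅c, b⁆ (comm_mem hcc hb)).mul_right
        (hc c hcc a ha ⁅a, b⁆ (comm_mem ha hb))) k,
      Commute.mul_pow (hc c hcc b hb ⁅a, b⁆ (comm_mem ha hb)) k]
  simp only [mul_assoc, mul_right_inj]
  rw [← mul_assoc (⁅c, b⁆ ^ k) a, ((hc c hcc b hb a ha).pow_left k).eq,
      mul_assoc a, ← mul_assoc c a, swap hc ha hcc]
  simp only [mul_assoc, mul_right_inj]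
  have hQS : ⁅c, a⁆ * ⁅a, c⁆ ^ k = ⁅c, a⁆ ^ k := by
    rw [show ⁅a, c⁆ ^ k = (⁅c, a⁆ ^ k)⁻¹ by rw [← inv_pow, commutatorElement_inv],
        mul_inv_eq_iff_eq_mul]
    exact (hs c hcc a ha).symm
  rw [← hQS]
  simp only [mul_assoc, mul_right_inj]
  have h5 : Commute (⁅c, b⁆ ^ k * ⁅a, b⁆ ^ k) (⁅a, c⁆ ^ k) :=
    (((hc c hcc b hb ⁅a, c⁆ (comm_mem ha hcc)).pow_left k).pow_right k).mul_left
      (((hc a ha b hb ⁅a, c⁆ (comm_mem ha hcc)).pow_left k).pow_right k)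
  rw [← mul_assoc, h5.eq]

end Main

theorem hord_aux (N : Subgroup G) [Finite G] {a b : G} (ha : a ∈ N) (hb : b ∈ N) :
    ⁅a, b⁆ ^ Nat.card (commutator ↥N) = 1 := by
  have hmem : ⁅(⟨a, ha⟩ : ↥N), (⟨b, hb⟩ : ↥N)⁆ ∈ commutator ↥N :=
    Subgroup.commutator_mem_commutator (Subgroup.mem_top _) (Subgroup.mem_top _)
  have h1 : (⟨⁅(⟨a, ha⟩ : ↥N), (⟨b, hb⟩ : ↥N)⁆, hmem⟩ : ↥(commutator ↥N))
      ^ Nat.card ↥(commutator ↥N) = 1 := pow_card_eq_one'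
  have h2 := congrArg (fun z : ↥(commutator ↥N) => ((z : ↥N) : G)) h1
  simp only [SubgroupClass.coe_pow, OneMemClass.coe_one, commutatorElement_def] at h2 ⊢
  simp only [Subgroup.coe_mul, InvMemClass.coe_inv] at h2
  exact h2

end Stmt8Aux

open Stmt8Aux in
/-- Let `G` be a finite group which is an inner semidirect product `G = NH`,
`N ∩ H = {1}`, of a normal nilpotent subgroup `N` of nilpotency class at most `2` whose
derived subgroup has odd order, by a subgroup `H` admitting a left brace structure.
Then `G` admits a left brace structure: there is an abelian group operation `+` on `G`,
with neutral element `1`, such that `a(b+c) + a = ab + ac` for all `a, b, c ∈ G`. -/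
theorem stmt8 {G : Type*} [Group G] [Finite G] (N H : Subgroup G)
    (hNnormal : N.Normal)
    (hNclass : ∀ a ∈ N, ∀ b ∈ N, ∀ c ∈ N, ⁅⁅a, b⁆, c⁆ = 1)
    (hNodd : Odd (Nat.card (commutator ↥N)))
    (hHbrace : ∃ add : ↥H → ↥H → ↥H,
      (∀ a b, add a b = add b a) ∧
      (∀ a b c, add (add a b) c = add a (add b c)) ∧
      (∀ a, add a 1 = a) ∧
      (∀ a, ∃ b, add a b = 1) ∧
      (∀ a b c, add (a * add b c) a = add (a * b) (a * c)))
    (hprod : ∀ g : G, ∃ n ∈ N, ∃ h ∈ H, g = n * h)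
    (hint : ∀ g : G, g ∈ N → g ∈ H → g = 1) :
    ∃ add : G → G → G,
      (∀ a b, add a b = add b a) ∧
      (∀ a b c, add (add a b) c = add a (add b c)) ∧
      (∀ a, add a 1 = a) ∧
      (∀ a, ∃ b, add a b = 1) ∧
      (∀ a b c, add (a * add b c) a = add (a * b) (a * c)) := by
  classical
  obtain ⟨addH, HAcomm, HAassoc, HAone, HAinv, HAbrace⟩ := hHbrace
  choose nf nfN hf hfH hfe using hprod
  set k : ℕ := (Nat.card (commutator ↥N) + 1) / 2 with hk
  -- commutators of elements of N are central in N
  have hcmt : ∀ a ∈ N, ∀ b ∈ N, ∀ c ∈ N, Commute ⁅a, b⁆ c := fun a ha b hb c hc =>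
    commutatorElement_eq_one_iff_commute.mp (hNclass a ha b hb c hc)
  -- `⁅a,b⁆ ^ k` is a square root of `⁅a,b⁆`
  have hs : ∀ a ∈ N, ∀ b ∈ N, ⁅a, b⁆ ^ k * ⁅a, b⁆ ^ k = ⁅a, b⁆ := by
    intro a ha b hb
    have hk2 : k + k = Nat.card (commutator ↥N) + 1 := by
      obtain ⟨t, ht⟩ := hNodd; omega
    rw [← pow_add, hk2, pow_succ, hord_aux N ha hb, one_mul]
  -- uniqueness of the decomposition g = n * h
  have uniq : ∀ g a b : G, a ∈ N → b ∈ H → g = a * b → nf g = a ∧ hf g = b := by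
    intro g a b haN hbH hab
    have key : a⁻¹ * nf g = b * (hf g)⁻¹ := by
      rw [inv_mul_eq_iff_eq_mul, ← mul_assoc, eq_mul_inv_iff_mul_eq]
      exact (hab.symm.trans (hfe g)).symm
    have m1 : a⁻¹ * nf g ∈ N := mul_mem (inv_mem haN) (nfN g)
    have m2 : a⁻¹ * nf g ∈ H := by
      rw [key]; exact mul_mem hbH (inv_mem (hfH g))
    have e1 : a⁻¹ * nf g = 1 := hint _ m1 m2
    refine ⟨(inv_mul_eq_one.mp e1).symm, ?_⟩
    exact (mul_inv_eq_one.mp (key.symm.trans e1)).symm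
  -- decomposition of a product
  have dms : ∀ x y : G,
      nf (x * y) = nf x * (hf x * nf y * (hf x)⁻¹) ∧ hf (x * y) = hf x * hf y := by
    intro x y
    refine uniq _ _ _ (mul_mem (nfN x) (hNnormal.conj_mem _ (nfN y) _))
      (mul_mem (hfH x) (hfH y)) ?_
    have e : x * y = (nf x * (hf x * nf y * (hf x)⁻¹)) * (hf x * hf y) := by
      conv_lhs => rw [hfe x, hfe y]
      group
    exact e
  -- the addition on G
  set f : G → G → G := fun x y =>
    nadd k (nf x) (nf y) * ((addH ⟨hf x, hfH x⟩ ⟨hf y, hfH y⟩ : ↥H) : G) with hf_def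
  have dec : ∀ x y : G, nf (f x y) = nadd k (nf x) (nf y) ∧
      hf (f x y) = ((addH ⟨hf x, hfH x⟩ ⟨hf y, hfH y⟩ : ↥H) : G) := fun x y =>
    uniq _ _ _ (nadd_mem (nfN x) (nfN y)) (SetLike.coe_mem _) rfl
  have p1 : ∀ a b, f a b = f b a := by
    intro a b
    show nadd k (nf a) (nf b) * _ = nadd k (nf b) (nf a) * _
    rw [nadd_comm hcmt hs (nfN a) (nfN b), HAcomm]
  have p2 : ∀ a b c, f (f a b) c = f a (f b c) := by
    intro a b c
    obtain ⟨d1n, d1h⟩ := dec a b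
    obtain ⟨d2n, d2h⟩ := dec b c
    have e1 : (⟨hf (f a b), hfH (f a b)⟩ : ↥H) = addH ⟨hf a, hfH a⟩ ⟨hf b, hfH b⟩ :=
      Subtype.ext d1h
    have e2 : (⟨hf (f b c), hfH (f b c)⟩ : ↥H) = addH ⟨hf b, hfH b⟩ ⟨hf c, hfH c⟩ :=
      Subtype.ext d2h
    show nadd k (nf (f a b)) (nf c) * _ = nadd k (nf a) (nf (f b c)) * _
    rw [d1n, d2n, e1, e2, nadd_assoc hcmt (nfN a) (nfN b) (nfN c), HAassoc]
  have p3 : ∀ a, f a 1 = a := by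
    intro a
    obtain ⟨h1n, h1h⟩ := uniq 1 1 1 (one_mem N) (one_mem H) (one_mul 1).symm
    have e : (⟨hf 1, hfH 1⟩ : ↥H) = 1 := Subtype.ext (by simp [h1h])
    show nadd k (nf a) (nf 1) * _ = a
    rw [h1n, e, HAone, nadd_one]
    exact (hfe a).symm
  have p4 : ∀ a, ∃ b, f a b = 1 := by
    intro a
    obtain ⟨b', hb'⟩ := HAinv ⟨hf a, hfH a⟩
    refine ⟨(nf a)⁻¹ * (b' : G), ?_⟩
    obtain ⟨dn, dh⟩ := uniq ((nf a)⁻¹ * (b' : G)) (nf a)⁻¹ (b' : G)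
      (inv_mem (nfN a)) b'.2 rfl
    have e : (⟨hf ((nf a)⁻¹ * (b' : G)), hfH _⟩ : ↥H) = b' := Subtype.ext dh
    show nadd k (nf a) (nf _) * _ = 1
    rw [dn, e, hb', nadd_inv]
    simp
  have p5 : ∀ a b c, f (a * f b c) a = f (a * b) (a * c) := by
    intro a b c
    obtain ⟨d1n, d1h⟩ := dec b c
    obtain ⟨d2n, d2h⟩ := dms a (f b c)
    obtain ⟨d3n, d3h⟩ := dms a b
    obtain ⟨d4n, d4h⟩ := dms a c
    have e1 : (⟨hf (a * f b c), hfH _⟩ : ↥H)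
        = ⟨hf a, hfH a⟩ * addH ⟨hf b, hfH b⟩ ⟨hf c, hfH c⟩ := by
      apply Subtype.ext
      show hf (a * f b c) = hf a * ((addH ⟨hf b, hfH b⟩ ⟨hf c, hfH c⟩ : ↥H) : G)
      rw [d2h, d1h]
    have e3 : (⟨hf (a * b), hfH _⟩ : ↥H) = ⟨hf a, hfH a⟩ * ⟨hf b, hfH b⟩ := by
      apply Subtype.ext
      show hf (a * b) = hf a * hf b
      exact d3h
    have e4 : (⟨hf (a * c), hfH _⟩ : ↥H) = ⟨hf a, hfH a⟩ * ⟨hf c, hfH c⟩ := by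
      apply Subtype.ext
      show hf (a * c) = hf a * hf c
      exact d4h
    show nadd k (nf (a * f b c)) (nf a) * _ = nadd k (nf (a * b)) (nf (a * c)) * _
    rw [e1, e3, e4, HAbrace, d2n, d1n, d3n, d4n, nadd_conj k (hf a) (nf b) (nf c),
      nadd_brace hcmt hs (nfN a) (hNnormal.conj_mem _ (nfN b) _)
        (hNnormal.conj_mem _ (nfN c) _)]
  exact ⟨f, p1, p2, p3, p4, p5⟩
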